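/- Let R be a rainbow graph on vertex set [k] with edge set E, viewed as a T-edge-colored complete graph with T = E ∪ {∅}, and let H be an n-vertex T-edge-colored complete graph with coloring χ_H. Then for every x ∈ V(H) and all distinct i, j ∈ [k], |N_i(x)| + |N_j(x)| ≤ n + d_{{i,j}}(x) + d_∅(x), where d_{{i,j}}(x) is the number of vertices y ≠ x with χ_H(xy) = {i,j} (this count is 0 if {i,j} ∉ E) and d_∅(x) is the number of vertices y ≠ x with χ_H(xy) = ∅. -/

import Mathlib

open Finset Filter

open scoped Classical

section Defs

variable {T : Type}

/-- A coloring of the complete graph is symmetric. -/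
def IsSym {V : Type} (χ : V → V → T) : Prop := ∀ u v, χ u v = χ v u

/-- `copyCount k n R χ` : the number of `k`-element subsets of `Fin n` whose coloring
induced by `χ` is isomorphic (as an edge-colored complete graph) to `R`. -/
noncomputable def copyCount (k n : ℕ) (R : Fin k → Fin k → T) (χ : Fin n → Fin n → T) : ℕ :=
  ((Finset.powersetCard k (Finset.univ : Finset (Fin n))).filter
    (fun S => ∃ φ : Fin k → Fin n, Function.Injective φ ∧ (∀ a, φ a ∈ S) ∧
      ∀ a b : Fin k, a ≠ b → χ (φ a) (φ b) = R a b)).card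

/-- `maxCopyCount k n R = I(R,n)` : the maximum of `copyCount` over all symmetric
`T`-colorings of the complete graph on `n` vertices. -/
noncomputable def maxCopyCount [Fintype T] (k n : ℕ) (R : Fin k → Fin k → T) : ℕ :=
  Finset.sup ((Finset.univ : Finset (Fin n → Fin n → T)).filter (fun χ => IsSym χ))
    (fun χ => copyCount k n R χ)

/-- `vertDeg k n R χ x = d(x)` : the number of `k`-subsets containing `x` whose induced
coloring is isomorphic to `R`. -/
noncomputable def vertDeg (k n : ℕ) (R : Fin k → Fin k → T) (χ : Fin n → Fin n → T)
    (x : Fin n) : ℕ :=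
  ((Finset.powersetCard k (Finset.univ : Finset (Fin n))).filter
    (fun S => x ∈ S ∧ ∃ φ : Fin k → Fin n, Function.Injective φ ∧ (∀ a, φ a ∈ S) ∧
      ∀ a b : Fin k, a ≠ b → χ (φ a) (φ b) = R a b)).card

/-- `embCount k n R χ i x = d_i(x)` : the number of injective color-preserving maps
`φ : Fin k → Fin n` with `φ i = x`. -/
noncomputable def embCount (k n : ℕ) (R : Fin k → Fin k → T) (χ : Fin n → Fin n → T)
    (i : Fin k) (x : Fin n) : ℕ :=
  ((Finset.univ : Finset (Fin k → Fin n)).filter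
    (fun φ => Function.Injective φ ∧ φ i = x ∧
      ∀ a b : Fin k, a ≠ b → χ (φ a) (φ b) = R a b)).card

/-- `Nset k n R χ i x = N_i(x)` : the set of vertices `y ≠ x` lying in the image of some
injective color-preserving map `φ : Fin k → Fin n` with `φ i = x`. -/
noncomputable def Nset (k n : ℕ) (R : Fin k → Fin k → T) (χ : Fin n → Fin n → T)
    (i : Fin k) (x : Fin n) : Finset (Fin n) :=
  (Finset.univ : Finset (Fin n)).filter
    (fun y => y ≠ x ∧ ∃ φ : Fin k → Fin n, Function.Injective φ ∧ φ i = x ∧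
      (∀ a b : Fin k, a ≠ b → χ (φ a) (φ b) = R a b) ∧ ∃ a, φ a = y)

/-- `colorDeg χ x c = d_c(x)` : the number of vertices `y ≠ x` with `χ x y = c`. -/
noncomputable def colorDeg {n : ℕ} (χ : Fin n → Fin n → T) (x : Fin n) (c : T) : ℕ :=
  ((Finset.univ : Finset (Fin n)).filter (fun y => y ≠ x ∧ χ x y = c)).card

end Defs

/-- The rainbow `k`-clique: the edge `ij` gets color `{i,j}`. -/
def rainbowClique (k : ℕ) : Fin k → Fin k → Finset (Fin k) := fun i j => {i, j}

/-- A rainbow graph `G` on `[k]`, viewed as an edge-colored complete graph: edges `ij ∈ E`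
get color `{i,j}`, non-edges get color `∅`. -/
noncomputable def rainbowOf {k : ℕ} (G : SimpleGraph (Fin k)) :
    Fin k → Fin k → Finset (Fin k) :=
  fun i j => if G.Adj i j then {i, j} else ∅

/-- `B(x)` : the set of neighbors of `x`, i.e. vertices joined to `x` by a non-`∅` color. -/
noncomputable def Bset {k n : ℕ} (χ : Fin n → Fin n → Finset (Fin k)) (x : Fin n) :
    Finset (Fin n) :=
  (Finset.univ : Finset (Fin n)).filter (fun y => y ≠ x ∧ χ x y ≠ ∅)

/-- The degree of vertex `i` in the graph `G`. -/
noncomputable def degR {k : ℕ} (G : SimpleGraph (Fin k)) (i : Fin k) : ℕ :=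
  ((Finset.univ : Finset (Fin k)).filter (fun j => G.Adj i j)).card

lemma mem_Nset_color {k n : ℕ} (G : SimpleGraph (Fin k))
    (χ : Fin n → Fin n → Finset (Fin k)) (x : Fin n) (i : Fin k) (y : Fin n)
    (hy : y ∈ Nset k n (rainbowOf G) χ i x) :
    χ x y = ∅ ∨ ∃ a, a ≠ i ∧ χ x y = {i, a} := by
  simp only [Nset, Finset.mem_filter, Finset.mem_univ, true_and] at hy
  obtain ⟨hyx, φ, hinj, hφi, hcol, a, hφa⟩ := hy
  have hai : a ≠ i := by
    intro h; subst h; exact hyx (hφa ▸ hφi)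
  have := hcol i a (Ne.symm hai)
  rw [hφi, hφa] at this
  rw [this, rainbowOf]
  by_cases h : G.Adj i a
  · right; exact ⟨a, hai, by simp [h]⟩
  · left; simp [h]

/-- for a rainbow graph `R` on `[k]` and any `x` and distinct `i, j`,
`|N_i(x)| + |N_j(x)| ≤ n + d_{{i,j}}(x) + d_∅(x)`. -/
theorem neighborhoods_overlap (k n : ℕ) (G : SimpleGraph (Fin k))
    (χ : Fin n → Fin n → Finset (Fin k)) (hχ : IsSym χ)
    (x : Fin n) (i j : Fin k) (hij : i ≠ j) :
    (Nset k n (rainbowOf G) χ i x).card + (Nset k n (rainbowOf G) χ j x).card ≤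
      n + colorDeg χ x ({i, j} : Finset (Fin k)) + colorDeg χ x (∅ : Finset (Fin k)) := by
  set Ni := Nset k n (rainbowOf G) χ i x
  set Nj := Nset k n (rainbowOf G) χ j x
  have h1 : (Ni ∪ Nj).card + (Ni ∩ Nj).card = Ni.card + Nj.card :=
    Finset.card_union_add_card_inter _ _
  have h2 : (Ni ∪ Nj).card ≤ n := by
    simpa using Finset.card_le_card (Finset.subset_univ (Ni ∪ Nj))
  have h3 : Ni ∩ Nj ⊆
      ((Finset.univ : Finset (Fin n)).filter (fun y => y ≠ x ∧ χ x y = ({i, j} : Finset (Fin k)))) ∪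
      ((Finset.univ : Finset (Fin n)).filter (fun y => y ≠ x ∧ χ x y = (∅ : Finset (Fin k)))) := by
    intro y hy
    rw [Finset.mem_inter] at hy
    obtain ⟨hyi, hyj⟩ := hy
    have hyx : y ≠ x := by
      have := hyi; simp only [Ni, Nset, Finset.mem_filter] at this; exact this.2.1
    rcases mem_Nset_color G χ x i y hyi with hc | ⟨a, hai, hca⟩
    · exact Finset.mem_union_right _ (by simp [hyx, hc])
    rcases mem_Nset_color G χ x j y hyj with hc | ⟨b, hbj, hcb⟩
    · exact Finset.mem_union_right _ (by simp [hyx, hc])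
    have hj : j ∈ χ x y := by rw [hcb]; simp
    rw [hca] at hj
    simp only [Finset.mem_insert, Finset.mem_singleton] at hj
    rcases hj with h | h
    · exact absurd h.symm hij
    · subst h
      exact Finset.mem_union_left _ (by simp [hyx, hca])
  have h4 : (Ni ∩ Nj).card ≤
      colorDeg χ x ({i, j} : Finset (Fin k)) + colorDeg χ x (∅ : Finset (Fin k)) := by
    unfold colorDeg
    refine le_trans (Finset.card_le_card h3) ?_
    convert Finset.card_union_le _ _ using 3 <;> congr 1
  omega
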